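/- Let n be a natural number and let x be a real number with 0 ≤ x and (n+1)·x ≤ 1/2. Then the series Σ_{l=0}^{∞} ( (n+1+l)! / ( n! · (l+2)! ) ) · x^l converges and its sum is at most n+1. -/
import Mathlib

lemma fact_key (n l : ℕ) :
    2 * Nat.factorial (n + 1 + l) ≤
      Nat.factorial n * Nat.factorial (l + 2) * (n + 1) ^ (l + 1) := by
  induction l with
  | zero =>
    simp [Nat.factorial_succ, Nat.factorial]
    ring_nf
    omega
  | succ l ih =>
    have h1 : n + 1 + (l + 1) = (n + 1 + l) + 1 := by ring
    rw [h1, Nat.factorial_succ]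
    calc 2 * ((n + 1 + l + 1) * Nat.factorial (n + 1 + l))
        = (n + 1 + l + 1) * (2 * Nat.factorial (n + 1 + l)) := by ring
      _ ≤ (n + 1 + l + 1) * (Nat.factorial n * Nat.factorial (l + 2) * (n + 1) ^ (l + 1)) :=
          Nat.mul_le_mul_left _ ih
      _ ≤ ((l + 3) * (n + 1)) * (Nat.factorial n * Nat.factorial (l + 2) * (n + 1) ^ (l + 1)) := by
          apply Nat.mul_le_mul_right
          nlinarith
      _ = Nat.factorial n * ((l + 3) * Nat.factorial (l + 2)) * (n + 1) ^ (l + 2) := by ring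
      _ = Nat.factorial n * Nat.factorial (l + 1 + 2) * (n + 1) ^ (l + 1 + 1) := by
          have h2 : Nat.factorial (l + 1 + 2) = (l + 3) * Nat.factorial (l + 2) := rfl
          rw [h2]

theorem stmt_7 (n : ℕ) (x : ℝ) (hx : 0 ≤ x) (hnx : (n + 1 : ℝ) * x ≤ 1 / 2) :
    Summable (fun l : ℕ =>
      (Nat.factorial (n + 1 + l) : ℝ) /
        ((Nat.factorial n : ℝ) * (Nat.factorial (l + 2) : ℝ)) * x ^ l) ∧
    (∑' l : ℕ,
      (Nat.factorial (n + 1 + l) : ℝ) /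
        ((Nat.factorial n : ℝ) * (Nat.factorial (l + 2) : ℝ)) * x ^ l) ≤ n + 1 := by
  set f : ℕ → ℝ := fun l =>
    (Nat.factorial (n + 1 + l) : ℝ) /
      ((Nat.factorial n : ℝ) * (Nat.factorial (l + 2) : ℝ)) * x ^ l with hf
  set g : ℕ → ℝ := fun l => ((n : ℝ) + 1) / 2 * (1 / 2) ^ l with hg
  have hfnonneg : ∀ l, 0 ≤ f l := by
    intro l
    apply mul_nonneg
    · apply div_nonneg (Nat.cast_nonneg _)
      positivity
    · exact pow_nonneg hx l
  have hfle : ∀ l, f l ≤ g l := by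
    intro l
    have hd : (Nat.factorial (n + 1 + l) : ℝ) /
        ((Nat.factorial n : ℝ) * (Nat.factorial (l + 2) : ℝ)) ≤ ((n : ℝ) + 1) ^ (l + 1) / 2 := by
      rw [div_le_div_iff₀ (by positivity) (by norm_num)]
      have := fact_key n l
      have : (2 * Nat.factorial (n + 1 + l) : ℝ) ≤
          (Nat.factorial n * Nat.factorial (l + 2) * (n + 1) ^ (l + 1) : ℕ) := by
        exact_mod_cast Nat.cast_le.mpr this
      push_cast at this ⊢
      linarith
    have hxl : ((n : ℝ) + 1) ^ (l + 1) / 2 * x ^ l = ((n : ℝ) + 1) / 2 * (((n : ℝ) + 1) * x) ^ l := by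
      rw [mul_pow, pow_succ]
      ring
    calc f l ≤ ((n : ℝ) + 1) ^ (l + 1) / 2 * x ^ l :=
          mul_le_mul_of_nonneg_right hd (pow_nonneg hx l)
      _ = ((n : ℝ) + 1) / 2 * (((n : ℝ) + 1) * x) ^ l := hxl
      _ ≤ ((n : ℝ) + 1) / 2 * (1 / 2) ^ l := by
          apply mul_le_mul_of_nonneg_left _ (by positivity)
          exact pow_le_pow_left₀ (mul_nonneg (by positivity) hx) hnx l
  have hgsum : Summable g := by
    apply Summable.mul_left
    exact summable_geometric_of_lt_one (by norm_num) (by norm_num)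
  have hfsum : Summable f := Summable.of_nonneg_of_le hfnonneg hfle hgsum
  refine ⟨hfsum, ?_⟩
  calc (∑' l, f l) ≤ ∑' l, g l := Summable.tsum_le_tsum hfle hfsum hgsum
    _ = ((n : ℝ) + 1) / 2 * (1 / (1 - 1 / 2)) := by
        rw [hg, tsum_mul_left, tsum_geometric_of_lt_one (by norm_num) (by norm_num)]
        norm_num
    _ = (n : ℝ) + 1 := by norm_num
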